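/- arXiv:cs/0506029 — 5 statements merged into one kernel-verified Lean document; each statement's English description precedes it below -/
import Mathlib

section
/- Let X be the sum of squares of k i.i.d. mean-zero Gaussian random variables each of variance σ², and let β satisfy 0 < β < kσ². Then P(X ≤ β) ≤ (β/(σ²k))^{k/2} · e^{k/2 - β/(2σ²)}. -/
open MeasureTheory ProbabilityTheory Real

lemma integral_exp_mul_sq_gaussian (σ2 : NNReal) (hσ2 : 0 < (σ2 : ℝ)) (t : ℝ)
    (ht : t < (2 * (σ2:ℝ))⁻¹) :
    ∫ x, Real.exp (t * x ^ 2) ∂(gaussianReal 0 σ2) = (Real.sqrt (1 - 2 * t * σ2))⁻¹ := by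
  have hv : σ2 ≠ 0 := fun h => by simp [h] at hσ2
  have hb : (0:ℝ) < (2 * (σ2:ℝ))⁻¹ - t := by linarith
  rw [gaussianReal_of_var_ne_zero 0 hv]
  have hpdf : gaussianPDF 0 σ2 = fun x => ((Real.toNNReal (gaussianPDFReal 0 σ2 x)) : ENNReal) := by
    rfl
  rw [hpdf, integral_withDensity_eq_integral_smul
    ((measurable_gaussianPDFReal 0 σ2).real_toNNReal)]
  have : ∀ x : ℝ, (Real.toNNReal (gaussianPDFReal 0 σ2 x)) • Real.exp (t * x ^ 2)
      = (Real.sqrt (2 * π * σ2))⁻¹ * Real.exp (-((2 * (σ2:ℝ))⁻¹ - t) * x ^ 2) := by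
    intro x
    rw [NNReal.smul_def, Real.coe_toNNReal _ (gaussianPDFReal_nonneg 0 σ2 x)]
    simp only [smul_eq_mul, gaussianPDFReal, sub_zero, mul_assoc, ← Real.exp_add]
    congr 2
    field_simp
    ring
  simp_rw [this]
  rw [integral_const_mul, integral_gaussian]
  rw [← Real.sqrt_inv, ← Real.sqrt_mul (by positivity), ← Real.sqrt_inv]
  congr 1
  have h1 : π ≠ 0 := Real.pi_ne_zero
  have h2 : (σ2:ℝ) ≠ 0 := hσ2.ne'
  have h3 : ((2 * (σ2:ℝ))⁻¹ - t) ≠ 0 := hb.ne'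
  have h4 : (1 - 2 * t * (σ2:ℝ)) ≠ 0 := by
    have : (1 - 2 * t * (σ2:ℝ)) = 2 * σ2 * ((2 * (σ2:ℝ))⁻¹ - t) := by field_simp
    rw [this]; positivity
  have key : (2 * π * (σ2:ℝ)) * ((2 * (σ2:ℝ))⁻¹ - t) = π * (1 - 2 * t * σ2) := by
    field_simp
  calc (2 * π * (σ2:ℝ))⁻¹ * (π / ((2 * (σ2:ℝ))⁻¹ - t))
      = π / ((2 * π * (σ2:ℝ)) * ((2 * (σ2:ℝ))⁻¹ - t)) := by
        rw [inv_mul_eq_div, div_div, mul_comm]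
    _ = π / (π * (1 - 2 * t * σ2)) := by rw [key]
    _ = (1 - 2 * t * (σ2:ℝ))⁻¹ := by
        rw [div_eq_mul_inv, mul_inv, ← mul_assoc, mul_inv_cancel₀ h1, one_mul]

/-- Chernoff lower-tail bound for a scaled chi-square variable: if
`X = ∑_{i<k} w_i²` with the `w_i` i.i.d. mean-zero Gaussians of variance `σ²`,
and `0 < β < k σ²`, then `P(X ≤ β) ≤ (β/(σ² k))^{k/2} e^{k/2 - β/(2σ²)}`. -/
theorem chi_square_lower_tail
    {Ω : Type*} [MeasurableSpace Ω] (μ : Measure Ω) [IsProbabilityMeasure μ]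
    (k : ℕ) (hk : 0 < k) (σ2 : NNReal) (hσ2 : 0 < (σ2 : ℝ))
    (w : Fin k → Ω → ℝ) (hmeas : ∀ i, Measurable (w i))
    (hindep : iIndepFun w μ)
    (hdist : ∀ i, Measure.map (w i) μ = gaussianReal 0 σ2)
    (β : ℝ) (hβ0 : 0 < β) (hβ : β < k * σ2) :
    μ {ω | (∑ i, (w i ω) ^ 2) ≤ β} ≤
      ENNReal.ofReal ((β / (σ2 * k)) ^ ((k : ℝ) / 2) *
        Real.exp ((k : ℝ) / 2 - β / (2 * σ2))) := by
  have hkR : (0:ℝ) < k := Nat.cast_pos.mpr hk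
  set t : ℝ := (2 * (σ2:ℝ))⁻¹ - k / (2 * β) with ht_def
  have htlt : t < (2 * (σ2:ℝ))⁻¹ := by
    have : 0 < (k:ℝ) / (2 * β) := by positivity
    simp only [ht_def]; linarith
  have ht : t ≤ 0 := by
    rw [ht_def, sub_nonpos, inv_eq_one_div, div_le_div_iff₀ (by positivity) (by positivity)]
    nlinarith
  set Y : Fin k → Ω → ℝ := fun i ω => (w i ω) ^ 2 with hY_def
  have hYmeas : ∀ i, Measurable (Y i) := fun i => (hmeas i).pow_const 2
  have hYindep : iIndepFun Y μ :=
    hindep.comp (fun _ x => x ^ 2) (fun _ => measurable_id.pow_const 2)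
  have h_int : ∀ (f : Ω → ℝ), Measurable f → (∀ ω, 0 ≤ f ω) →
      Integrable (fun ω => Real.exp (t * f ω)) μ := by
    intro f hf hf0
    refine Integrable.mono' (integrable_const 1) ((hf.const_mul t).exp.aestronglyMeasurable) ?_
    filter_upwards with ω
    rw [Real.norm_eq_abs, abs_of_pos (Real.exp_pos _), ← Real.exp_zero]
    exact Real.exp_le_exp.mpr (mul_nonpos_of_nonpos_of_nonneg ht (hf0 ω))
  have hXmeas : Measurable (fun ω => ∑ i, Y i ω) := Finset.measurable_sum _ fun i _ => hYmeas i
  have hch := measure_le_le_exp_mul_mgf (X := fun ω => ∑ i, Y i ω) (μ := μ) β ht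
    (h_int _ hXmeas (fun ω => Finset.sum_nonneg fun i _ => sq_nonneg _))
  have hmgf_eq : mgf (fun ω => ∑ i, Y i ω) μ t = (β / (σ2 * k)) ^ ((k : ℝ) / 2) := by
    have hsum : (fun ω => ∑ i, Y i ω) = ∑ i, Y i := by ext ω; simp [Finset.sum_apply]
    rw [hsum, hYindep.mgf_sum hYmeas]
    have hone : ∀ i : Fin k, mgf (Y i) μ t = (Real.sqrt (1 - 2 * t * σ2))⁻¹ := by
      intro i
      have hmap := integral_map (μ := μ) (φ := w i) (hmeas i).aemeasurable
        (f := fun x => Real.exp (t * x ^ 2))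
        (((measurable_id.pow_const 2).const_mul t).exp.aestronglyMeasurable)
      rw [hdist i] at hmap
      calc mgf (Y i) μ t = ∫ ω, (fun x => Real.exp (t * x ^ 2)) (w i ω) ∂μ := rfl
        _ = ∫ x, Real.exp (t * x ^ 2) ∂(gaussianReal 0 σ2) := hmap.symm
        _ = (Real.sqrt (1 - 2 * t * σ2))⁻¹ := integral_exp_mul_sq_gaussian σ2 hσ2 t htlt
    simp_rw [hone]
    rw [Finset.prod_const, Finset.card_univ, Fintype.card_fin]
    have hc : 1 - 2 * t * (σ2:ℝ) = ((k:ℝ) * σ2) / β := by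
      rw [ht_def]; field_simp; ring
    rw [hc, ← Real.sqrt_inv, inv_div, mul_comm (k:ℝ) (σ2:ℝ), Real.sqrt_eq_rpow,
      ← Real.rpow_natCast ((β / ((σ2:ℝ) * k)) ^ ((1:ℝ)/2)) k,
      ← Real.rpow_mul (by positivity)]
    congr 1
    ring
  have hexp_eq : Real.exp (-t * β) = Real.exp ((k : ℝ) / 2 - β / (2 * σ2)) := by
    congr 1
    rw [ht_def]; field_simp; ring
  rw [hmgf_eq, hexp_eq] at hch
  rw [← ENNReal.ofReal_toReal (measure_ne_top μ _)]
  exact ENNReal.ofReal_le_ofReal (hch.trans (le_of_eq (mul_comm _ _)))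
end

section
/- Let X₁, X₂, ... be i.i.d. real random variables with P(X_i > 0) > 0, P(X_i < 0) > 0, E[X_i] < 0, and suppose λ₀ > 0 satisfies E[e^{λ₀ X_i}] = 1. Then for the random walk S_j = X₁ + ⋯ + X_j (with S₀ = 0) and any u > 0, P(sup_{j ≥ 0} S_j > u) ≤ e^{-λ₀ u}. -/
open MeasureTheory ProbabilityTheory Real

section WaldAux

variable {Ω : Type*} [MeasurableSpace Ω] {μ : Measure Ω} [IsProbabilityMeasure μ]

lemma wald_prod_integrable (Y : ℕ → Ω → ℝ) (hYmeas : ∀ i, Measurable (Y i))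
    (hYindep : iIndepFun Y μ) (hYint : ∀ i, Integrable (Y i) μ)
    (s : Finset ℕ) : Integrable (fun ω => ∏ i ∈ s, Y i ω) μ := by
  classical
  induction s using Finset.induction_on with
  | empty => simpa using integrable_const (1 : ℝ)
  | @insert a s ha ih =>
      have hI : IndepFun (∏ i ∈ s, Y i) (Y a) μ :=
        hYindep.indepFun_finsetProd_of_notMem hYmeas ha
      have ih' : Integrable (∏ i ∈ s, Y i) μ := by
        refine ih.congr (ae_of_all _ fun ω => ?_)
        simp [Finset.prod_apply]
      have h := hI.integrable_mul ih' (hYint a)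
      refine h.congr (ae_of_all _ fun ω => ?_)
      simp [Finset.prod_apply, Finset.prod_insert ha, mul_comm]

lemma wald_prod_integral (Y : ℕ → Ω → ℝ) (hYmeas : ∀ i, Measurable (Y i))
    (hYindep : iIndepFun Y μ) (hYone : ∀ i, ∫ ω, Y i ω ∂μ = 1)
    (s : Finset ℕ) : ∫ ω, ∏ i ∈ s, Y i ω ∂μ = 1 := by
  classical
  induction s using Finset.induction_on with
  | empty => simp
  | @insert a s ha ih =>
      have hI : IndepFun (∏ i ∈ s, Y i) (Y a) μ :=
        hYindep.indepFun_finsetProd_of_notMem hYmeas ha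
      have h0 : (∏ i ∈ s, Y i) = fun ω => ∏ i ∈ s, Y i ω := by
        funext ω; simp [Finset.prod_apply]
      have hPmeas : Measurable (∏ i ∈ s, Y i) := by
        rw [h0]; exact Finset.measurable_prod _ fun i _ => hYmeas i
      have h := hI.integral_mul_eq_mul_integral hPmeas.aestronglyMeasurable (hYmeas a).aestronglyMeasurable
      have heq : (fun ω => ∏ i ∈ insert a s, Y i ω) = (∏ i ∈ s, Y i) * Y a := by
        funext ω
        simp [Finset.prod_apply, Finset.prod_insert ha, mul_comm]
      show ∫ ω, ∏ i ∈ insert a s, Y i ω ∂μ = 1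
      rw [show (fun ω => ∏ i ∈ insert a s, Y i ω) = (∏ i ∈ s, Y i) * Y a from heq] at *
      rw [h, h0]
      rw [show (∫ ω, (fun ω => ∏ i ∈ s, Y i ω) ω ∂μ) = 1 from ih, one_mul]
      exact hYone a

lemma wald_key (X : ℕ → Ω → ℝ) (hmeas : ∀ i, Measurable (X i))
    (hindep : iIndepFun X μ)
    (lam0 : ℝ) (hlam0 : 0 < lam0)
    (hYone : ∀ i, ∫ ω, Real.exp (lam0 * X i ω) ∂μ = 1)
    (u : ℝ) (n : ℕ) :
    μ {ω | ∃ j < n, u < ∑ i ∈ Finset.range j, X i ω} ≤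
      ENNReal.ofReal (Real.exp (-lam0 * u)) := by
  classical
  set Y : ℕ → Ω → ℝ := fun i ω => Real.exp (lam0 * X i ω) with hY
  have hYmeas : ∀ i, Measurable (Y i) := fun i => (measurable_const.mul (hmeas i)).exp
  have hYindep : iIndepFun Y μ :=
    hindep.comp (fun _ x => Real.exp (lam0 * x))
      (fun _ => (measurable_const.mul measurable_id).exp)
  have hYint : ∀ i, Integrable (Y i) μ := by
    intro i
    by_contra h
    have := hYone i
    rw [integral_undef h] at this
    norm_num at this
  have hSmeas : ∀ j, Measurable fun ω => ∑ i ∈ Finset.range j, X i ω :=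
    fun j => Finset.measurable_sum _ fun i _ => hmeas i
  -- first-passage decomposition
  set A : ℕ → Set Ω := fun j =>
    {ω | (u < ∑ i ∈ Finset.range j, X i ω) ∧ ∀ k < j, ∑ i ∈ Finset.range k, X i ω ≤ u} with hA
  have hAmeas : ∀ j, MeasurableSet (A j) := by
    intro j
    have : A j = {ω | u < ∑ i ∈ Finset.range j, X i ω} ∩
        ⋂ k, ⋂ _ : k < j, {ω | ∑ i ∈ Finset.range k, X i ω ≤ u} := by
      ext ω; simp [hA, Set.mem_iInter]
    rw [this]
    exact (measurableSet_lt measurable_const (hSmeas j)).inter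
      (MeasurableSet.iInter fun k => MeasurableSet.iInter fun _ =>
        measurableSet_le (hSmeas k) measurable_const)
  have hAdisj : ∀ {j k : ℕ}, j < k → Disjoint (A j) (A k) := by
    intro j k hjk
    rw [Set.disjoint_left]
    intro ω hj hk
    exact absurd hj.1 (not_lt.mpr (hk.2 j hjk))
  have hPairwise : (↑(Finset.range n) : Set ℕ).PairwiseDisjoint A := by
    intro j _ k _ hjk
    rcases lt_or_gt_of_ne hjk with h | h
    · exact hAdisj h
    · exact (hAdisj h).symm
  have hcover : {ω | ∃ j < n, u < ∑ i ∈ Finset.range j, X i ω} = ⋃ j ∈ Finset.range n, A j := by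
    ext ω
    simp only [Set.mem_setOf_eq, Set.mem_iUnion, Finset.mem_range]
    constructor
    · rintro ⟨j, hjn, hj⟩
      have hex : ∃ m, u < ∑ i ∈ Finset.range m, X i ω := ⟨j, hj⟩
      refine ⟨Nat.find hex, lt_of_le_of_lt (Nat.find_min' hex hj) hjn,
        Nat.find_spec hex, fun k hk => ?_⟩
      exact not_lt.mp (Nat.find_min hex hk)
    · rintro ⟨j, hjn, hj⟩
      exact ⟨j, hjn, hj.1⟩
  -- per-piece bound
  have hkey : ∀ j ∈ Finset.range n,
      Real.exp (lam0 * u) * (μ (A j)).toReal ≤ ∫ ω in A j, ∏ i ∈ Finset.range n, Y i ω ∂μ := by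
    intro j hj
    have hjn : j ≤ n := le_of_lt (Finset.mem_range.mp hj)
    set s : Finset ℕ := Finset.range j with hs
    set t : Finset ℕ := Finset.Ico j n with ht
    have hst : Disjoint s t := by
      simp only [hs, ht, Finset.disjoint_left, Finset.mem_range, Finset.mem_Ico]
      omega
    have hXY := hindep.indepFun_finset s t hst hmeas
    set T : ℕ → (s → ℝ) → ℝ := fun k v => ∑ i : s, if (i : ℕ) < k then v i else 0 with hT
    have hTmeas : ∀ k, Measurable (T k) := by
      intro k
      apply Finset.measurable_sum
      intro i _
      by_cases h : (i : ℕ) < k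
      · simpa [h] using measurable_pi_apply i
      · simpa [h] using (measurable_const : Measurable fun _ : s → ℝ => (0 : ℝ))
    set C : Set (s → ℝ) := {v | (u < ∑ i : s, v i) ∧ ∀ k < j, T k v ≤ u} with hC
    have hCmeas : MeasurableSet C := by
      have : C = {v | u < ∑ i : s, v i} ∩ ⋂ k, ⋂ _ : k < j, {v | T k v ≤ u} := by
        ext v; simp [hC, Set.mem_iInter]
      rw [this]
      exact (measurableSet_lt measurable_const
          (Finset.measurable_sum _ fun i _ => measurable_pi_apply i)).inter
        (MeasurableSet.iInter fun k => MeasurableSet.iInter fun _ =>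
          measurableSet_le (hTmeas k) measurable_const)
    set g1 : (s → ℝ) → ℝ := C.indicator (fun v => ∏ i : s, Real.exp (lam0 * v i)) with hg1def
    set g2 : (t → ℝ) → ℝ := fun v => ∏ i : t, Real.exp (lam0 * v i) with hg2def
    have hg1 : Measurable g1 :=
      Measurable.indicator
        (Finset.measurable_prod _ fun i _ => (measurable_const.mul (measurable_pi_apply i)).exp)
        hCmeas
    have hg2 : Measurable g2 :=
      Finset.measurable_prod _ fun i _ => (measurable_const.mul (measurable_pi_apply i)).exp
    -- translating the comap side
    have hsum : ∀ ω, (∑ i : s, X i ω) = ∑ i ∈ Finset.range j, X i ω := fun ω =>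
      Finset.sum_coe_sort s (fun i => X i ω)
    have hTval : ∀ ω, ∀ k ≤ j, T k (fun i : s => X i ω) = ∑ i ∈ Finset.range k, X i ω := by
      intro ω k hk
      have h1 : T k (fun i : s => X i ω) = ∑ i ∈ s, (if i < k then X i ω else 0) :=
        Finset.sum_coe_sort s (fun i => if i < k then X i ω else 0)
      rw [h1, hs, ← Finset.sum_subset (Finset.range_subset_range.mpr hk)
        (fun x _ hx => if_neg (by simpa [Finset.mem_range] using hx))]
      exact Finset.sum_congr rfl fun x hx => if_pos (Finset.mem_range.mp hx)
    have hprodval : ∀ ω, (∏ i : s, Real.exp (lam0 * X i ω)) = ∏ i ∈ s, Y i ω := fun ω =>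
      Finset.prod_coe_sort s (fun i => Y i ω)
    have key1 : (g1 ∘ fun ω (i : s) => X i ω) = (A j).indicator (fun ω => ∏ i ∈ s, Y i ω) := by
      funext ω
      by_cases hω : ω ∈ A j
      · have hCmem : (fun i : s => X i ω) ∈ C := by
          refine ⟨?_, fun k hk => ?_⟩
          · rw [hsum ω]; exact hω.1
          · rw [hTval ω k hk.le]; exact hω.2 k hk
        simp only [Function.comp_apply, hg1def, Set.indicator_of_mem hCmem,
          Set.indicator_of_mem hω]
        exact hprodval ω
      · have hCmem : (fun i : s => X i ω) ∉ C := by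
          intro hc
          exact hω ⟨by rw [← hsum ω]; exact hc.1,
            fun k hk => by rw [← hTval ω k hk.le]; exact hc.2 k hk⟩
        simp only [Function.comp_apply, hg1def, Set.indicator_of_notMem hCmem,
          Set.indicator_of_notMem hω]
    have key2 : (g2 ∘ fun ω (i : t) => X i ω) = fun ω => ∏ i ∈ t, Y i ω := by
      funext ω
      exact Finset.prod_coe_sort t (fun i => Y i ω)
    have hIndep : IndepFun ((A j).indicator (fun ω => ∏ i ∈ s, Y i ω))
        (fun ω => ∏ i ∈ t, Y i ω) μ := by
      rw [← key1, ← key2]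
      exact hXY.comp hg1 hg2
    have hsplit : ∀ ω, (A j).indicator (fun ω => ∏ i ∈ Finset.range n, Y i ω) ω
        = (A j).indicator (fun ω => ∏ i ∈ s, Y i ω) ω * ∏ i ∈ t, Y i ω := by
      intro ω
      by_cases hω : ω ∈ A j
      · simp only [Set.indicator_of_mem hω]
        exact (Finset.prod_range_mul_prod_Ico _ hjn).symm
      · simp [Set.indicator_of_notMem hω]
    have hm1 : AEStronglyMeasurable ((A j).indicator fun ω => ∏ i ∈ s, Y i ω) μ :=
      (Measurable.indicator (Finset.measurable_prod _ fun i _ => hYmeas i)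
        (hAmeas j)).aestronglyMeasurable
    have hm2 : AEStronglyMeasurable (fun ω => ∏ i ∈ t, Y i ω) μ :=
      (Finset.measurable_prod _ fun i _ => hYmeas i).aestronglyMeasurable
    have hInt1 : ∫ ω in A j, ∏ i ∈ Finset.range n, Y i ω ∂μ
        = (∫ ω, (A j).indicator (fun ω => ∏ i ∈ s, Y i ω) ω ∂μ) *
            ∫ ω, ∏ i ∈ t, Y i ω ∂μ := by
      rw [← integral_indicator (hAmeas j)]
      simp_rw [hsplit]
      exact hIndep.integral_fun_mul_eq_mul_integral hm1 hm2
    have htone : ∫ ω, ∏ i ∈ t, Y i ω ∂μ = 1 :=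
      wald_prod_integral Y hYmeas hYindep hYone t
    rw [hInt1, htone, mul_one]
    -- lower bound on the indicator integral
    have hIntInd : Integrable ((A j).indicator fun ω => ∏ i ∈ s, Y i ω) μ :=
      (wald_prod_integrable Y hYmeas hYindep hYint s).indicator (hAmeas j)
    have hIntConst : Integrable ((A j).indicator fun _ => Real.exp (lam0 * u)) μ :=
      (integrable_const _).indicator (hAmeas j)
    have hpt : ∀ ω, (A j).indicator (fun _ => Real.exp (lam0 * u)) ω ≤
        (A j).indicator (fun ω => ∏ i ∈ s, Y i ω) ω := by
      intro ω
      by_cases hω : ω ∈ A j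
      · simp only [Set.indicator_of_mem hω]
        have : (∏ i ∈ s, Y i ω) = Real.exp (∑ i ∈ s, lam0 * X i ω) := (Real.exp_sum _ _).symm
        rw [this, ← Finset.mul_sum]
        exact Real.exp_le_exp.mpr (mul_le_mul_of_nonneg_left hω.1.le hlam0.le)
      · simp [Set.indicator_of_notMem hω]
    have hmono := integral_mono hIntConst hIntInd hpt
    have hconst : ∫ ω, (A j).indicator (fun _ => Real.exp (lam0 * u)) ω ∂μ
        = (μ (A j)).toReal * Real.exp (lam0 * u) := by
      rw [integral_indicator_const _ (hAmeas j)]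
      simp [smul_eq_mul, measureReal_def]
    rw [hconst] at hmono
    linarith [hmono]
  -- sum up
  have hPint : Integrable (fun ω => ∏ i ∈ Finset.range n, Y i ω) μ :=
    wald_prod_integrable Y hYmeas hYindep hYint (Finset.range n)
  have hsum_le : ∑ j ∈ Finset.range n, Real.exp (lam0 * u) * (μ (A j)).toReal
      ≤ 1 := by
    calc ∑ j ∈ Finset.range n, Real.exp (lam0 * u) * (μ (A j)).toReal
        ≤ ∑ j ∈ Finset.range n, ∫ ω in A j, ∏ i ∈ Finset.range n, Y i ω ∂μ :=
          Finset.sum_le_sum hkey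
      _ = ∫ ω in ⋃ j ∈ Finset.range n, A j, ∏ i ∈ Finset.range n, Y i ω ∂μ :=
          (integral_biUnion_finset (Finset.range n) (fun j _ => hAmeas j) hPairwise
            (fun j _ => hPint.integrableOn)).symm
      _ ≤ ∫ ω, ∏ i ∈ Finset.range n, Y i ω ∂μ :=
          setIntegral_le_integral hPint (ae_of_all _ fun ω =>
            Finset.prod_nonneg fun i _ => (Real.exp_pos _).le)
      _ = 1 := wald_prod_integral Y hYmeas hYindep hYone (Finset.range n)
  have hmeasE : μ {ω | ∃ j < n, u < ∑ i ∈ Finset.range j, X i ω}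
      = ∑ j ∈ Finset.range n, μ (A j) := by
    rw [hcover]
    exact measure_biUnion_finset hPairwise (fun j _ => hAmeas j)
  have htoReal : (μ {ω | ∃ j < n, u < ∑ i ∈ Finset.range j, X i ω}).toReal
      = ∑ j ∈ Finset.range n, (μ (A j)).toReal := by
    rw [hmeasE, ENNReal.toReal_sum fun j _ => measure_ne_top μ _]
  have hfinal : Real.exp (lam0 * u) *
      (μ {ω | ∃ j < n, u < ∑ i ∈ Finset.range j, X i ω}).toReal ≤ 1 := by
    rw [htoReal, Finset.mul_sum]
    exact hsum_le
  have hmul : Real.exp (-(lam0 * u)) * Real.exp (lam0 * u) = 1 := by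
    rw [← Real.exp_add]; simp
  have hr : (μ {ω | ∃ j < n, u < ∑ i ∈ Finset.range j, X i ω}).toReal
      ≤ Real.exp (-lam0 * u) := by
    rw [neg_mul]
    nlinarith [Real.exp_pos (lam0 * u), ENNReal.toReal_nonneg
      (a := μ {ω | ∃ j < n, u < ∑ i ∈ Finset.range j, X i ω})]
  calc μ {ω | ∃ j < n, u < ∑ i ∈ Finset.range j, X i ω}
      = ENNReal.ofReal (μ {ω | ∃ j < n, u < ∑ i ∈ Finset.range j, X i ω}).toReal :=
        (ENNReal.ofReal_toReal (measure_ne_top μ _)).symm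
    _ ≤ ENNReal.ofReal (Real.exp (-lam0 * u)) := ENNReal.ofReal_le_ofReal hr

end WaldAux

/-- Wald's inequality: for a random walk `S_j = X₁ + ⋯ + X_j` with i.i.d. steps
satisfying `P(X > 0) > 0`, `P(X < 0) > 0`, `E[X] < 0`, and `λ₀ > 0` with
`E[e^{λ₀ X}] = 1`, one has `P(sup_{j≥0} S_j > u) ≤ e^{-λ₀ u}` for every `u > 0`. -/
theorem wald_inequality
    {Ω : Type*} [MeasurableSpace Ω] (μ : Measure Ω) [IsProbabilityMeasure μ]
    (X : ℕ → Ω → ℝ) (hmeas : ∀ i, Measurable (X i))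
    (hindep : iIndepFun X μ)
    (hident : ∀ i, Measure.map (X i) μ = Measure.map (X 0) μ)
    (hpos : 0 < μ {ω | 0 < X 0 ω}) (hneg : 0 < μ {ω | X 0 ω < 0})
    (hint : Integrable (X 0) μ) (hdrift : ∫ ω, X 0 ω ∂μ < 0)
    (lam0 : ℝ) (hlam0 : 0 < lam0)
    (hmgf : ∫ ω, Real.exp (lam0 * X 0 ω) ∂μ = 1)
    (u : ℝ) (hu : 0 < u) :
    μ {ω | ∃ j : ℕ, u < ∑ i ∈ Finset.range j, X i ω} ≤
      ENNReal.ofReal (Real.exp (-lam0 * u)) := by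
  have hexpmeas : Measurable fun x : ℝ => Real.exp (lam0 * x) :=
    (measurable_const.mul measurable_id).exp
  have hYone : ∀ i, ∫ ω, Real.exp (lam0 * X i ω) ∂μ = 1 := by
    intro i
    have h1 : ∫ ω, Real.exp (lam0 * X i ω) ∂μ
        = ∫ x, Real.exp (lam0 * x) ∂(Measure.map (X i) μ) :=
      (integral_map (hmeas i).aemeasurable hexpmeas.aestronglyMeasurable).symm
    rw [h1, hident i, integral_map (hmeas 0).aemeasurable hexpmeas.aestronglyMeasurable]
    exact hmgf
  have hEq : {ω | ∃ j : ℕ, u < ∑ i ∈ Finset.range j, X i ω}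
      = ⋃ n : ℕ, {ω | ∃ j < n, u < ∑ i ∈ Finset.range j, X i ω} := by
    ext ω
    simp only [Set.mem_setOf_eq, Set.mem_iUnion]
    exact ⟨fun ⟨j, hj⟩ => ⟨j + 1, j, Nat.lt_succ_self j, hj⟩, fun ⟨n, j, _, hj⟩ => ⟨j, hj⟩⟩
  rw [hEq]
  have hmono : Monotone fun n : ℕ => {ω | ∃ j < n, u < ∑ i ∈ Finset.range j, X i ω} := by
    intro a b hab ω
    rintro ⟨j, hja, hj⟩
    exact ⟨j, lt_of_lt_of_le hja hab, hj⟩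
  rw [hmono.measure_iUnion]
  exact iSup_le fun n => wald_key X hmeas hindep lam0 hlam0 hYone u n
end

section
/- Let the cost function of a node x₁^k in a tree be f(x₁^k) = ∑_{i=1}^k w_i(x₁^i) - bk with b ≥ 0 and w_i ≥ 0. If x̄₁^m is the leaf path chosen by the stack (best-first) algorithm, then for every leaf path x₁^m in the tree, max_{1 ≤ j ≤ m} f(x̄₁^j) ≤ max_{1 ≤ j ≤ m} f(x₁^j). -/
/-! Model of the stack (best-first) tree-search algorithm on the full tree of
depth `m` over a finite alphabet `α`.  A node is a list of symbols (the path from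
the root); `w p` is the branch metric of the node `p`; the cost of a node is
`f(x₁^k) = ∑_{i=1}^k w_i(x₁^i) - b k`.  The algorithm keeps a frontier `F`,
repeatedly expands a minimum-cost node, and stops when a leaf (length `m`) is
best; `G` accumulates the set of generated nodes. -/

namespace StackAlg

variable {α : Type} [Fintype α] [DecidableEq α]

/-- Cost `f(x₁^k) = ∑_{i=1}^k w_i(x₁^i) - b k` of a node. -/
def cost (w : List α → ℝ) (b : ℝ) (l : List α) : ℝ :=
  ((l.inits.filter fun p => !p.isEmpty).map w).sum - b * l.length

/-- Maximum of the cost along the (nonempty) prefixes of a node. -/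
def maxCost (w : List α → ℝ) (b : ℝ) (l : List α) : ℝ :=
  ((l.inits.tail).map (cost w b)).foldr max (cost w b l)

/-- Children of a node in the full tree of depth `m`. -/
def children (m : ℕ) (l : List α) : Finset (List α) :=
  if l.length < m then Finset.univ.image (fun a : α => l ++ [a]) else ∅

/-- The stack algorithm: expand a minimum-cost frontier node until a leaf is
on top; returns the chosen leaf (if any) and the set of generated nodes. -/
noncomputable def run (w : List α → ℝ) (b : ℝ) (m : ℕ) :
    ℕ → Finset (List α) → Finset (List α) → Option (List α) × Finset (List α)
  | 0, _, G => (none, G)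
  | fuel + 1, F, G =>
      if hF : F.Nonempty then
        let n := Classical.choose (F.exists_min_image (cost w b) hF)
        if n.length = m then (some n, G)
        else run w b m fuel ((F.erase n) ∪ children m n) (G ∪ children m n)
      else (none, G)

/-! ### Auxiliary lemmas -/

lemma mem_children {m : ℕ} {n p : List α} :
    p ∈ children m n ↔ n.length < m ∧ ∃ a, n ++ [a] = p := by
  unfold children
  split
  · simp_all
  · simp_all

lemma le_foldr_max {a c : ℝ} {L : List ℝ} (h : a ∈ L) : a ≤ L.foldr max c := by
  induction L with
  | nil => simp at h
  | cons y t ih =>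
    rcases List.mem_cons.1 h with rfl | h
    · exact le_max_left _ _
    · exact le_trans (ih h) (le_max_right _ _)

lemma foldr_max_le {c C : ℝ} {L : List ℝ} (hc : c ≤ C) (h : ∀ y ∈ L, y ≤ C) :
    L.foldr max c ≤ C := by
  induction L with
  | nil => simpa
  | cons y t ih =>
    exact max_le (h y (by simp)) (ih fun z hz => h z (by simp [hz]))

lemma mem_inits_tail_of_prefix {x q : List α} (h : q <+: x) (hq : q ≠ []) :
    q ∈ x.inits.tail := by
  cases x with
  | nil => exact absurd (List.prefix_nil.1 h) hq
  | cons a t =>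
    cases q with
    | nil => exact absurd rfl hq
    | cons b s =>
      obtain ⟨rfl, hs⟩ := List.cons_prefix_cons.1 h
      simp only [List.inits_cons, List.tail_cons, List.mem_map]
      exact ⟨s, (List.mem_inits _ _).2 hs, rfl⟩

lemma cost_le_maxCost {w : List α → ℝ} {b : ℝ} {x q : List α}
    (h : q <+: x) (hq : q ≠ []) : cost w b q ≤ maxCost w b x :=
  le_foldr_max (List.mem_map_of_mem (f := cost w b) (mem_inits_tail_of_prefix h hq))

lemma maxCost_le {w : List α → ℝ} {b : ℝ} {x : List α} {C : ℝ}
    (hbase : cost w b x ≤ C)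
    (h : ∀ p, p <+: x → p ≠ [] → cost w b p ≤ C) : maxCost w b x ≤ C := by
  refine foldr_max_le hbase ?_
  intro y hy
  obtain ⟨p, hp, rfl⟩ := List.mem_map.1 hy
  have hpx : p <+: x := (List.mem_inits _ _).1 (List.mem_of_mem_tail hp)
  have hpne : p ≠ [] := by
    cases x with
    | nil => simp [List.inits] at hp
    | cons a t =>
      simp only [List.inits_cons, List.tail_cons, List.mem_map] at hp
      obtain ⟨s, -, rfl⟩ := hp
      simp
  exact h p hpx hpne

/-- Key invariant of the stack algorithm: if the frontier contains a prefix of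
a leaf `x` with cost at most `C` (where `C` dominates the cost of every
nonempty prefix of `x`), and the run returns a leaf `xbar`, then some frontier
element `r` is a prefix of `xbar` and every prefix of `xbar` extending `r`
has cost at most `C`. -/
lemma run_spec (w : List α → ℝ) (b : ℝ) (m : ℕ) (x : List α) (hx : x.length = m)
    (C : ℝ) (hC : ∀ p, p <+: x → p ≠ [] → cost w b p ≤ C) :
    ∀ fuel (F G : Finset (List α)) (xbar : List α) (G' : Finset (List α)),
      run w b m fuel F G = (some xbar, G') →
      (∃ q ∈ F, q <+: x ∧ cost w b q ≤ C) →
      xbar.length = m ∧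
        ∃ r ∈ F, r <+: xbar ∧ ∀ p, r <+: p → p <+: xbar → cost w b p ≤ C := by
  intro fuel
  induction fuel with
  | zero => intro F G xbar G' hrun; simp [run] at hrun
  | succ fuel ih =>
    intro F G xbar G' hrun hq
    obtain ⟨q, hqF, hqx, hqC⟩ := hq
    have hF : F.Nonempty := ⟨q, hqF⟩
    rw [run, dif_pos hF] at hrun
    set n := Classical.choose (F.exists_min_image (cost w b) hF) with hn
    obtain ⟨hnF, hnmin⟩ := Classical.choose_spec (F.exists_min_image (cost w b) hF)
    simp only [← hn] at hrun hnmin hnF ⊢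
    by_cases hlen : n.length = m
    · rw [if_pos hlen] at hrun
      simp only [Prod.mk.injEq, Option.some.injEq] at hrun
      obtain ⟨rfl, rfl⟩ := hrun
      refine ⟨hlen, n, hnF, List.prefix_refl _, ?_⟩
      intro p hp1 hp2
      have : p = n := hp2.eq_of_length_le hp1.length_le
      subst this
      exact le_trans (hnmin q hqF) hqC
    · rw [if_neg hlen] at hrun
      -- find a prefix of x in the new frontier
      have hq' : ∃ q' ∈ (F.erase n) ∪ children m n, q' <+: x ∧ cost w b q' ≤ C := by
        by_cases hqn : q = n
        · subst hqn
          have hqlt : n.length < m := lt_of_le_of_ne (hx ▸ hqx.length_le) hlen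
          obtain ⟨t, ht⟩ := hqx
          have htne : t ≠ [] := by
            rintro rfl
            exact hlen (by simpa [← ht] using hx)
          obtain ⟨c, t', rfl⟩ := List.exists_cons_of_ne_nil htne
          refine ⟨n ++ [c], ?_, ?_, ?_⟩
          · exact Finset.mem_union_right _ (mem_children.2 ⟨hqlt, c, rfl⟩)
          · exact ⟨t', by simpa using ht⟩
          · exact hC _ ⟨t', by simpa using ht⟩ (by simp)
        · exact ⟨q, Finset.mem_union_left _ (Finset.mem_erase.2 ⟨hqn, hqF⟩), hqx, hqC⟩
      obtain ⟨hxbarlen, r', hr'F, hr'x, hr'prop⟩ := ih _ _ xbar G' hrun hq'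
      refine ⟨hxbarlen, ?_⟩
      rcases Finset.mem_union.1 hr'F with hr' | hr'
      · exact ⟨r', Finset.mem_of_mem_erase hr', hr'x, hr'prop⟩
      · obtain ⟨-, a, rfl⟩ := mem_children.1 hr'
        refine ⟨n, hnF, (List.prefix_append _ _).trans hr'x, ?_⟩
        intro p hp1 hp2
        by_cases hpn : p = n
        · subst hpn
          exact le_trans (hnmin q hqF) hqC
        · have hlenp : n.length + 1 ≤ p.length := by
            have := hp1.length_le
            rcases lt_or_eq_of_le this with h | h
            · omega
            · exact absurd (hp1.eq_of_length_le (le_of_eq h.symm)).symm hpn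
          have : n ++ [a] <+: p :=
            List.prefix_of_prefix_length_le hr'x hp2 (by simpa using hlenp)
          exact hr'prop p this hp2

/-- Minimax property of the stack algorithm (Proposition 1): the chosen leaf path
minimizes, over all root-to-leaf paths, the maximum cost along the path. -/
theorem stack_minimax (w : List α → ℝ) (hw : ∀ l, 0 ≤ w l) (b : ℝ) (hb : 0 ≤ b)
    (m fuel : ℕ) (xbar : List α) (G : Finset (List α))
    (hrun : run w b m fuel {([] : List α)} {([] : List α)} = (some xbar, G))
    (x : List α) (hx : x.length = m) :
    maxCost w b xbar ≤ maxCost w b x := by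
  -- first step of the run
  cases fuel with
  | zero => simp [run] at hrun
  | succ fuel =>
    have hF : ({([] : List α)} : Finset (List α)).Nonempty := ⟨[], by simp⟩
    rw [run, dif_pos hF] at hrun
    set n := Classical.choose (Finset.exists_min_image {([] : List α)} (cost w b) hF) with hn
    obtain ⟨hnF, -⟩ :=
      Classical.choose_spec (Finset.exists_min_image {([] : List α)} (cost w b) hF)
    have hn0 : n = [] := by rw [hn]; simpa using hnF
    simp only [← hn, hn0, List.length_nil] at hrun
    by_cases hm : m = 0
    · subst hm
      rw [if_pos rfl] at hrun
      simp only [Prod.mk.injEq, Option.some.injEq] at hrun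
      obtain ⟨h1, -⟩ := hrun
      have hx0 : x = [] := List.length_eq_zero_iff.1 hx
      subst hx0
      rw [← h1]
    · rw [if_neg (fun h => hm h.symm)] at hrun
      -- x is nonempty
      have hxne : x ≠ [] := by
        intro h; subst h; simp at hx; exact hm hx.symm
      obtain ⟨c, t, rfl⟩ := List.exists_cons_of_ne_nil hxne
      have hm0 : 0 < m := Nat.pos_of_ne_zero hm
      have hq : ∃ q ∈ (({([] : List α)} : Finset (List α)).erase []) ∪ children m [],
          q <+: c :: t ∧ cost w b q ≤ maxCost w b (c :: t) := by
        refine ⟨[c], Finset.mem_union_right _ (mem_children.2 ⟨by simpa using hm0, c, rfl⟩),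
          ⟨t, rfl⟩, cost_le_maxCost ⟨t, rfl⟩ (by simp)⟩
      obtain ⟨hxlen, r, hrF, hrx, hrprop⟩ := run_spec w b m (c :: t) hx (maxCost w b (c :: t))
        (fun p hp hpne => cost_le_maxCost hp hpne) fuel _ _ xbar G hrun hq
      have hrlen : r.length = 1 := by
        rcases Finset.mem_union.1 hrF with h | h
        · simp at h
        · obtain ⟨-, a, rfl⟩ := mem_children.1 h
          simp
      have hall : ∀ p, p <+: xbar → p ≠ [] → cost w b p ≤ maxCost w b (c :: t) := by
        intro p hp hpne
        have h1 : 1 ≤ p.length := by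
          cases p with
          | nil => exact absurd rfl hpne
          | cons _ _ => simp
        have : r <+: p := List.prefix_of_prefix_length_le hrx hp (hrlen ▸ h1)
        exact hrprop p this hp
      have hxbne : xbar ≠ [] := by
        intro h; rw [h] at hxlen; exact hm hxlen.symm
      exact maxCost_le (hall xbar (List.prefix_refl _) hxbne) hall

end StackAlg
end

section
/- Let f'_M = max{0, |w_{r+k+1}|² - b, |w_{r+k+1}^{r+k+2}|² - 2b, …, |w_{r+k+1}^n|² - b(m-k)} where |w_{r+k+1}^{r+k+j}|² denotes the sum of squares of j consecutive standard Gaussians, and suppose b > 1 with λ₀ > 0 being the positive root of -2λb = log(1-2λ). Then P(f'_M > bk) ≤ e^{-bkλ₀} for every k ≥ 1. -/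
open MeasureTheory ProbabilityTheory Real Finset
open scoped ENNReal NNReal

private lemma gauss_pointwise {lam0 b : ℝ} (hlam0 : 0 < lam0) (hlam0' : lam0 < 1 / 2)
    (hroot : -2 * lam0 * b = Real.log (1 - 2 * lam0)) (x : ℝ) :
    Real.exp (lam0 * (x ^ 2 - b)) * gaussianPDFReal 0 1 x
      = ((Real.sqrt (2 * π))⁻¹ * Real.sqrt (1 - 2 * lam0)) * Real.exp (-((1/2 - lam0) * x ^ 2)) := by
  have hpos : (0:ℝ) < 1 - 2 * lam0 := by linarith
  have he : Real.exp (-(lam0 * b)) = Real.sqrt (1 - 2 * lam0) := by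
    have h1 : -(lam0 * b) = Real.log (1 - 2 * lam0) / 2 := by linarith
    rw [h1, ← Real.log_sqrt hpos.le, Real.exp_log (Real.sqrt_pos.mpr hpos)]
  simp only [gaussianPDFReal, NNReal.coe_one, mul_one, sub_zero]
  rw [← he]
  rw [mul_comm (Real.exp (lam0 * (x ^ 2 - b))), mul_assoc, ← Real.exp_add,
    mul_assoc, ← Real.exp_add]
  congr 2
  ring

private lemma gauss_int {lam0 b : ℝ} (hlam0 : 0 < lam0) (hlam0' : lam0 < 1 / 2)
    (hroot : -2 * lam0 * b = Real.log (1 - 2 * lam0)) :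
    Integrable (fun x => Real.exp (lam0 * (x ^ 2 - b))) (gaussianReal 0 1) ∧
    ∫ x, Real.exp (lam0 * (x ^ 2 - b)) ∂(gaussianReal 0 1) = 1 := by
  have hpos : (0:ℝ) < 1 - 2 * lam0 := by linarith
  have hpos' : (0:ℝ) < 1/2 - lam0 := by linarith
  have hmg : Measurable fun x : ℝ => Real.exp (lam0 * (x ^ 2 - b)) := by fun_prop
  have hpdfeq : gaussianPDF 0 1 = fun x => ((Real.toNNReal (gaussianPDFReal 0 1 x) : ℝ≥0) : ℝ≥0∞) := rfl
  have hkey : (fun x => Real.exp (lam0 * (x ^ 2 - b)) * gaussianPDFReal 0 1 x)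
      = fun x => ((Real.sqrt (2 * π))⁻¹ * Real.sqrt (1 - 2 * lam0)) *
          Real.exp (-((1/2 - lam0) * x ^ 2)) :=
    funext fun x => gauss_pointwise hlam0 hlam0' hroot x
  have hintR : Integrable (fun x => ((Real.sqrt (2 * π))⁻¹ * Real.sqrt (1 - 2 * lam0)) *
      Real.exp (-((1/2 - lam0) * x ^ 2))) := by
    have := (integrable_exp_neg_mul_sq hpos').const_mul
      ((Real.sqrt (2 * π))⁻¹ * Real.sqrt (1 - 2 * lam0))
    simpa only [neg_mul] using this
  rw [gaussianReal_of_var_ne_zero 0 one_ne_zero]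
  constructor
  · rw [integrable_withDensity_iff (measurable_gaussianPDF 0 1)
      (ae_of_all _ fun x => ENNReal.ofReal_lt_top)]
    have : (fun x => Real.exp (lam0 * (x ^ 2 - b)) * (gaussianPDF 0 1 x).toReal)
        = fun x => Real.exp (lam0 * (x ^ 2 - b)) * gaussianPDFReal 0 1 x := by
      funext x
      rw [gaussianPDF, ENNReal.toReal_ofReal (gaussianPDFReal_nonneg _ _ _)]
    rw [this, hkey]
    exact hintR
  · rw [hpdfeq, integral_withDensity_eq_integral_smul
      ((measurable_gaussianPDFReal 0 1).real_toNNReal)]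
    have : (fun x => Real.toNNReal (gaussianPDFReal 0 1 x) • Real.exp (lam0 * (x ^ 2 - b)))
        = fun x => Real.exp (lam0 * (x ^ 2 - b)) * gaussianPDFReal 0 1 x := by
      funext x
      rw [NNReal.smul_def, smul_eq_mul, Real.coe_toNNReal _ (gaussianPDFReal_nonneg _ _ _), mul_comm]
    have hig : ∫ a : ℝ, Real.exp (-((1/2 - lam0) * a ^ 2)) = Real.sqrt (π / (1/2 - lam0)) := by
      rw [← integral_gaussian]
      simp only [neg_mul]
    rw [this, hkey, integral_const_mul, hig]
    have h2 : (1 - 2*lam0) * (π / (1/2 - lam0)) = 2 * π := by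
      field_simp
    rw [mul_assoc, ← Real.sqrt_mul hpos.le, h2,
      inv_mul_cancel₀ (ne_of_gt (Real.sqrt_pos.mpr (by positivity)))]


/-- Wald bound on the maximum of the stopped random walk
`f'_M = max_{0 ≤ j ≤ N} (∑_{i<j} w_i² - b j)` with `w_i` i.i.d. `N(0,1)`:
if `b > 1` and `λ₀ ∈ (0, 1/2)` is the positive root of `-2λb = log(1-2λ)`,
then `P(f'_M > bk) ≤ e^{-bkλ₀}` for every `k ≥ 1`. -/
theorem stopped_walk_tail_bound
    {Ω : Type*} [MeasurableSpace Ω] (μ : Measure Ω) [IsProbabilityMeasure μ]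
    (w : ℕ → Ω → ℝ) (hmeas : ∀ i, Measurable (w i))
    (hindep : iIndepFun w μ)
    (hdist : ∀ i, Measure.map (w i) μ = gaussianReal 0 1)
    (b : ℝ) (hb : 1 < b) (lam0 : ℝ) (hlam0 : 0 < lam0) (hlam0' : lam0 < 1 / 2)
    (hroot : -2 * lam0 * b = Real.log (1 - 2 * lam0))
    (N : ℕ) (k : ℕ) (hk : 1 ≤ k) :
    μ {ω | b * k <
        (Finset.range (N + 1)).sup' Finset.nonempty_range_add_one
          (fun j => (∑ i ∈ Finset.range j, (w i ω) ^ 2) - b * j)} ≤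
      ENNReal.ofReal (Real.exp (-(b * k * lam0))) := by
  have hw : ∀ i, StronglyMeasurable (w i) := fun i => (hmeas i).stronglyMeasurable
  have hbk : (0:ℝ) < b * k := by
    have : (1:ℝ) ≤ (k:ℝ) := by exact_mod_cast hk
    nlinarith
  set h : ℝ → ℝ := fun x => Real.exp (lam0 * (x ^ 2 - b)) with hhdef
  have hhm : Measurable h := by fun_prop
  have hgint : ∀ i, Integrable (fun ω => h (w i ω)) μ := by
    intro i
    have h1 := (gauss_int hlam0 hlam0' hroot).1
    rw [← hdist i] at h1
    exact (integrable_map_measure hhm.aestronglyMeasurable (hmeas i).aemeasurable).mp h1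
  have hgE : ∀ i, ∫ ω, h (w i ω) ∂μ = 1 := by
    intro i
    have h1 : ∫ ω, h (w i ω) ∂μ = ∫ x, h x ∂(Measure.map (w i) μ) :=
      (integral_map (hmeas i).aemeasurable hhm.aestronglyMeasurable).symm
    rw [h1, hdist i]
    exact (gauss_int hlam0 hlam0' hroot).2
  set 𝒢 := MeasureTheory.Filtration.natural w hw with h𝒢
  set F : ℕ → Ω → ℝ := fun n ω => ∏ i ∈ Finset.range (n + 1), h (w i ω) with hFdef
  have hwle : ∀ i n, i ≤ n → Measurable[𝒢 n] (w i) := by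
    intro i n hin
    refine (comap_measurable (w i)).mono ?_ le_rfl
    exact le_iSup₂_of_le i hin le_rfl
  have hFmeas : ∀ n, StronglyMeasurable[𝒢 n] (F n) := by
    intro n
    refine Measurable.stronglyMeasurable ?_
    exact Finset.measurable_prod _ fun i hi =>
      hhm.comp (hwle i n (Nat.lt_succ_iff.mp (Finset.mem_range.mp hi)))
  have hFsplit : ∀ n, F (n + 1) = F n * fun ω => h (w (n + 1) ω) := by
    intro n
    funext ω
    simp [hFdef, Finset.prod_range_succ]
  have hindFn : ∀ n, IndepFun (F n) (fun ω => h (w (n + 1) ω)) μ := by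
    intro n
    rw [IndepFun_iff_Indep]
    refine indep_of_indep_of_le_left (indep_of_indep_of_le_right
      ((hindep.indep_comap_natural_of_lt hw n.lt_succ_self).symm) ?_) ?_
    · exact (hhm.comp (comap_measurable (w (n + 1)))).comap_le
    · exact (hFmeas n).measurable.comap_le
  have hFint : ∀ n, Integrable (F n) μ := by
    intro n
    induction n with
    | zero => simpa [hFdef] using hgint 0
    | succ n ih =>
      rw [hFsplit n]
      exact (hindFn n).integrable_mul ih (hgint (n + 1))
  have hmart : Martingale F 𝒢 μ := by
    refine martingale_nat hFmeas hFint fun n => ?_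
    have h1 : μ[F (n + 1)|𝒢 n] =ᵐ[μ] F n * μ[(fun ω => h (w (n + 1) ω))|𝒢 n] := by
      rw [hFsplit n]
      exact condExp_mul_of_stronglyMeasurable_left (hFmeas n) ((hFsplit n) ▸ hFint (n + 1)) (hgint (n + 1))
    have h2 : μ[(fun ω => h (w (n + 1) ω))|𝒢 n] =ᵐ[μ] fun _ => 1 := by
      have h3 := condExp_indep_eq (μ := μ)
        ((hmeas (n + 1)).comap_le) (𝒢.le n)
        ((hhm.comp (comap_measurable (w (n + 1)))).stronglyMeasurable)
        (hindep.indep_comap_natural_of_lt hw n.lt_succ_self)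
      simp only [Function.comp] at h3
      rw [hgE (n + 1)] at h3
      exact h3
    filter_upwards [h1, h2] with ω hω1 hω2
    rw [hω1, Pi.mul_apply, hω2]
    simp
  have hFmean : ∀ n, ∫ ω, F n ω ∂μ = 1 := by
    intro n
    have h1 : μ[F n|𝒢 0] =ᵐ[μ] F 0 := hmart.condExp_ae_eq (Nat.zero_le n)
    have h2 : ∫ ω, (μ[F n|𝒢 0]) ω ∂μ = ∫ ω, F n ω ∂μ := integral_condExp (𝒢.le 0)
    rw [← h2, integral_congr_ae h1]
    simpa [hFdef] using hgE 0
  have hFpos : ∀ n ω, 0 < F n ω := by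
    intro n ω
    exact Finset.prod_pos fun i _ => Real.exp_pos _
  have hFexp : ∀ n ω, F n ω =
      Real.exp (lam0 * ((∑ i ∈ Finset.range (n + 1), (w i ω) ^ 2) - b * (n + 1))) := by
    intro n ω
    simp only [hFdef, hhdef]
    rw [← Real.exp_sum]
    congr 1
    simp only [mul_sub, Finset.sum_sub_distrib, Finset.mul_sum, Finset.sum_const,
      Finset.card_range, nsmul_eq_mul]
    push_cast
    ring
  rcases N with _ | M
  · have hempty : {ω : Ω | b * k < (Finset.range (0 + 1)).sup' Finset.nonempty_range_add_one
        (fun j => (∑ i ∈ Finset.range j, (w i ω) ^ 2) - b * j)} = ∅ := by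
      ext ω
      simp only [Set.mem_setOf_eq, Set.mem_empty_iff_false, iff_false, not_lt]
      refine le_trans (Finset.sup'_le _ _ ?_) hbk.le
      intro j hj
      simp only [Finset.mem_range] at hj
      have hj0 : j = 0 := by omega
      subst hj0
      simp
    rw [hempty, measure_empty]
    exact zero_le
  · set ε : ℝ≥0 := (Real.exp (b * k * lam0)).toNNReal with hε
    have hεR : (ε : ℝ) = Real.exp (b * k * lam0) := Real.coe_toNNReal _ (Real.exp_pos _).le
    set A := {ω : Ω | (ε : ℝ) ≤ (Finset.range (M + 1)).sup' Finset.nonempty_range_add_one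
      fun j => F j ω} with hA
    have hsub : {ω : Ω | b * k < (Finset.range (M + 1 + 1)).sup' Finset.nonempty_range_add_one
        (fun j => (∑ i ∈ Finset.range j, (w i ω) ^ 2) - b * j)} ⊆ A := by
      intro ω hω
      rw [Set.mem_setOf_eq, Finset.lt_sup'_iff] at hω
      obtain ⟨j, hjmem, hj⟩ := hω
      rw [Finset.mem_range] at hjmem
      rcases j with _ | jj
      · norm_num at hj
        linarith
      · have hjj : jj ∈ Finset.range (M + 1) := Finset.mem_range.mpr (Nat.lt_of_succ_lt_succ hjmem)
        rw [hA, Set.mem_setOf_eq]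
        refine le_trans ?_ (Finset.le_sup' (f := fun j => F j ω) hjj)
        rw [hεR, hFexp jj ω]
        apply Real.exp_le_exp.mpr
        rw [mul_comm (b * (k:ℝ)) lam0]
        refine mul_le_mul_of_nonneg_left ?_ hlam0.le
        push_cast at hj ⊢
        linarith
    refine le_trans (measure_mono hsub) ?_
    have hmax := maximal_ineq hmart.submartingale (fun n ω => (hFpos n ω).le) (ε := ε) M
    have hset_le : ENNReal.ofReal (∫ ω in A, F M ω ∂μ) ≤ 1 := by
      have h1 : ∫ ω in A, F M ω ∂μ ≤ ∫ ω, F M ω ∂μ :=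
        setIntegral_le_integral (hFint M) (ae_of_all _ fun ω => (hFpos M ω).le)
      calc ENNReal.ofReal (∫ ω in A, F M ω ∂μ)
          ≤ ENNReal.ofReal (∫ ω, F M ω ∂μ) := ENNReal.ofReal_le_ofReal h1
        _ = 1 := by rw [hFmean M]; simp
    have hμA : (ε : ℝ≥0∞) * μ A ≤ 1 := le_trans hmax hset_le
    have hinv : μ A ≤ (ε : ℝ≥0∞)⁻¹ :=
      ENNReal.le_inv_iff_mul_le.mpr (by rwa [mul_comm])
    refine le_trans hinv (le_of_eq ?_)
    have hcoe : (ε : ℝ≥0∞) = ENNReal.ofReal (Real.exp (b * k * lam0)) := rfl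
    rw [hcoe, ← ENNReal.ofReal_inv_of_pos (Real.exp_pos _), ← Real.exp_neg]
end

section
/- For η > b > 0, the incomplete gamma bound γ(bk/(2η), (r+k)/2) ≤ ((b/η)·e^{1 - b/η})^{k/2} holds for all integers k ≥ 1 and r ≥ 0, where γ(x, a) = (1/Γ(a))∫₀^x t^{a-1}e^{-t}dt is the regularized lower incomplete gamma function. -/
open Real

/-- The regularized lower incomplete gamma function
`γ(x, a) = (1/Γ(a)) ∫₀ˣ t^{a-1} e^{-t} dt`. -/
noncomputable def regIncGamma (x a : ℝ) : ℝ :=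
  (1 / Real.Gamma a) * ∫ t in (0 : ℝ)..x, t ^ (a - 1) * Real.exp (-t)

/-- For `η > b > 0`, integers `k ≥ 1` and `r ≥ 0`,
`γ(bk/(2η), (r+k)/2) ≤ ((b/η) e^{1 - b/η})^{k/2}`. -/
theorem incGamma_bound (b η : ℝ) (hb : 0 < b) (hbη : b < η) (k r : ℕ) (hk : 1 ≤ k) :
    regIncGamma (b * k / (2 * η)) (((r : ℝ) + k) / 2) ≤
      (b / η * Real.exp (1 - b / η)) ^ ((k : ℝ) / 2) := by
  have hη : 0 < η := hb.trans hbη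
  set u : ℝ := b / η with hu_def
  have hu0 : 0 < u := div_pos hb hη
  have hu1 : u < 1 := (div_lt_one hη).mpr hbη
  set c : ℝ := η / b with hc_def
  have hc1 : 1 < c := (one_lt_div hb).mpr hbη
  have hc0 : 0 < c := lt_trans one_pos hc1
  have hcu : 1 / c = u := by
    rw [hc_def, hu_def, one_div_div]
  set x : ℝ := b * k / (2 * η) with hx_def
  set a : ℝ := ((r : ℝ) + k) / 2 with ha_def
  have hk1 : (1 : ℝ) ≤ (k : ℝ) := by exact_mod_cast hk
  have hkr : (0 : ℝ) ≤ (r : ℝ) := Nat.cast_nonneg r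
  have ha : 0 < a := by rw [ha_def]; positivity
  have hx : 0 < x := by rw [hx_def]; positivity
  have hΓ : 0 < Real.Gamma a := Real.Gamma_pos_of_pos ha
  have ha1 : (-1 : ℝ) < a - 1 := by linarith
  -- integrability facts
  have hint_c : MeasureTheory.IntegrableOn
      (fun t : ℝ => t ^ (a - 1) * Real.exp (-(c * t))) (Set.Ioi 0) := by
    have := integrableOn_rpow_mul_exp_neg_mul_rpow ha1 (one_pos : (0 : ℝ) < 1) hc0
    simpa [Real.rpow_one, neg_mul] using this
  have hint_1 : MeasureTheory.IntegrableOn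
      (fun t : ℝ => t ^ (a - 1) * Real.exp (-t)) (Set.Ioi 0) := by
    have := integrableOn_rpow_mul_exp_neg_mul_rpow ha1 (one_pos : (0 : ℝ) < 1) one_pos
    simpa [Real.rpow_one, neg_mul] using this
  have hII1 : IntervalIntegrable (fun t : ℝ => t ^ (a - 1) * Real.exp (-t))
      MeasureTheory.volume 0 x := by
    rw [intervalIntegrable_iff_integrableOn_Ioc_of_le hx.le]
    exact hint_1.mono_set Set.Ioc_subset_Ioi_self
  have hII2 : IntervalIntegrable
      (fun t : ℝ => Real.exp ((c - 1) * x) * (t ^ (a - 1) * Real.exp (-(c * t))))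
      MeasureTheory.volume 0 x := by
    apply IntervalIntegrable.const_mul
    rw [intervalIntegrable_iff_integrableOn_Ioc_of_le hx.le]
    exact hint_c.mono_set Set.Ioc_subset_Ioi_self
  -- pointwise bound on [0, x]
  have hpt : ∀ t ∈ Set.Icc (0 : ℝ) x,
      t ^ (a - 1) * Real.exp (-t)
        ≤ Real.exp ((c - 1) * x) * (t ^ (a - 1) * Real.exp (-(c * t))) := by
    intro t ht
    have h1 : Real.exp (-t) ≤ Real.exp ((c - 1) * x) * Real.exp (-(c * t)) := by
      rw [← Real.exp_add]
      apply Real.exp_le_exp.mpr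
      nlinarith [ht.1, ht.2]
    calc t ^ (a - 1) * Real.exp (-t)
        ≤ t ^ (a - 1) * (Real.exp ((c - 1) * x) * Real.exp (-(c * t))) :=
          mul_le_mul_of_nonneg_left h1 (Real.rpow_nonneg ht.1 _)
      _ = Real.exp ((c - 1) * x) * (t ^ (a - 1) * Real.exp (-(c * t))) := by ring
  -- step 1: interval integral comparison
  have step1 : (∫ t in (0 : ℝ)..x, t ^ (a - 1) * Real.exp (-t))
      ≤ Real.exp ((c - 1) * x) * ∫ t in (0 : ℝ)..x, t ^ (a - 1) * Real.exp (-(c * t)) := by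
    rw [← intervalIntegral.integral_const_mul]
    exact intervalIntegral.integral_mono_on hx.le hII1 hII2 hpt
  -- step 2: extend to Ioi 0
  have step2 : (∫ t in (0 : ℝ)..x, t ^ (a - 1) * Real.exp (-(c * t)))
      ≤ ∫ t in Set.Ioi (0 : ℝ), t ^ (a - 1) * Real.exp (-(c * t)) := by
    rw [intervalIntegral.integral_of_le hx.le]
    apply MeasureTheory.setIntegral_mono_set hint_c
    · filter_upwards [MeasureTheory.ae_restrict_mem measurableSet_Ioi] with t ht
      have ht0 : 0 < t := ht
      positivity
    · exact Filter.Eventually.of_forall fun t ht => Set.Ioc_subset_Ioi_self ht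
  have step3 : (∫ t in Set.Ioi (0 : ℝ), t ^ (a - 1) * Real.exp (-(c * t)))
      = (1 / c) ^ a * Real.Gamma a :=
    Real.integral_rpow_mul_exp_neg_mul_Ioi ha hc0
  -- combine
  have hbound : regIncGamma x a ≤ Real.exp ((c - 1) * x) * u ^ a := by
    rw [regIncGamma]
    have hI : (∫ t in (0 : ℝ)..x, t ^ (a - 1) * Real.exp (-t))
        ≤ Real.exp ((c - 1) * x) * (u ^ a * Real.Gamma a) := by
      calc (∫ t in (0 : ℝ)..x, t ^ (a - 1) * Real.exp (-t))
          ≤ Real.exp ((c - 1) * x) * ∫ t in (0 : ℝ)..x, t ^ (a - 1) * Real.exp (-(c * t)) :=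
            step1
        _ ≤ Real.exp ((c - 1) * x) * ((1 / c) ^ a * Real.Gamma a) := by
            apply mul_le_mul_of_nonneg_left _ (Real.exp_nonneg _)
            rw [← step3]; exact step2
        _ = Real.exp ((c - 1) * x) * (u ^ a * Real.Gamma a) := by rw [hcu]
    calc (1 / Real.Gamma a) * ∫ t in (0 : ℝ)..x, t ^ (a - 1) * Real.exp (-t)
        ≤ (1 / Real.Gamma a) * (Real.exp ((c - 1) * x) * (u ^ a * Real.Gamma a)) := by
          apply mul_le_mul_of_nonneg_left hI (by positivity)
      _ = Real.exp ((c - 1) * x) * u ^ a := by field_simp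
  -- rewrite the exponent
  have hexp : (c - 1) * x = (1 - u) * ((k : ℝ) / 2) := by
    rw [hc_def, hx_def, hu_def]
    field_simp
  -- u ^ a ≤ u ^ (k/2)
  have hua : u ^ a ≤ u ^ ((k : ℝ) / 2) := by
    apply Real.rpow_le_rpow_of_exponent_ge hu0 hu1.le
    rw [ha_def]; linarith
  have hfinal : (u * Real.exp (1 - u)) ^ ((k : ℝ) / 2)
      = Real.exp ((1 - u) * ((k : ℝ) / 2)) * u ^ ((k : ℝ) / 2) := by
    rw [Real.mul_rpow hu0.le (Real.exp_nonneg _), ← Real.exp_mul]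
    ring
  calc regIncGamma x a ≤ Real.exp ((c - 1) * x) * u ^ a := hbound
    _ ≤ Real.exp ((c - 1) * x) * u ^ ((k : ℝ) / 2) :=
        mul_le_mul_of_nonneg_left hua (Real.exp_nonneg _)
    _ = (u * Real.exp (1 - u)) ^ ((k : ℝ) / 2) := by rw [hexp, hfinal]
end
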